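/- Let (p,q) ∈ ℐ := {(p,q) ∈ ℝ² : (p−1)² ≤ q < p²}, let s ∈ J_{p,q} := (−√(p−√q), √(p−√q)), and set h := h_{p,q}(s) := √(p − s² + √((p − s²)² − q)). Then s² + (1/2)·(h + (1−p)/h)² + (q − (p−1)²)/(2h²) = 1. Consequently, for every unit vector x ∈ ℝ^m the point (s·x, (√2/2)·(h + (1−p)/h), √(q−(p−1)²)/(√2·h)) lies on the unit sphere 𝕊^{m+1} ⊂ ℝ^{m+2}. -/

import Mathlib

/-- For `(p,q) ∈ ℐ`, `s ∈ J_{p,q}` and `h = h_{p,q}(s)` one has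
`s² + (1/2)(h + (1−p)/h)² + (q − (p−1)²)/(2h²) = 1`; consequently, for every unit vector
`x ∈ ℝ^m` the point `(s·x, (√2/2)(h+(1−p)/h), √(q−(p−1)²)/(√2 h))` lies on the unit
sphere `𝕊^{m+1} ⊂ ℝ^{m+2}`. -/
theorem stmt_8 (p q : ℝ) (hpq1 : (p - 1) ^ 2 ≤ q) (hpq2 : q < p ^ 2) (s : ℝ)
    (hs : s ∈ Set.Ioo (-Real.sqrt (p - Real.sqrt q)) (Real.sqrt (p - Real.sqrt q)))
    (h : ℝ) (hdef : h = Real.sqrt (p - s ^ 2 + Real.sqrt ((p - s ^ 2) ^ 2 - q))) :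
    s ^ 2 + (1 / 2) * (h + (1 - p) / h) ^ 2 + (q - (p - 1) ^ 2) / (2 * h ^ 2) = 1 ∧
    ∀ (m : ℕ) (x : EuclideanSpace ℝ (Fin m)), ‖x‖ = 1 →
      ((WithLp.equiv 2 (Fin (m + 2) → ℝ)).symm
          (Fin.snoc
            (Fin.snoc (fun i : Fin m => s * x i)
              (Real.sqrt 2 / 2 * (h + (1 - p) / h)))
            (Real.sqrt (q - (p - 1) ^ 2) / (Real.sqrt 2 * h))) :
        EuclideanSpace ℝ (Fin (m + 2))) ∈
      Metric.sphere (0 : EuclideanSpace ℝ (Fin (m + 2))) 1 := by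
  have hq0 : 0 ≤ q := le_trans (sq_nonneg _) hpq1
  have hr0 : 0 < Real.sqrt (p - Real.sqrt q) := by
    have := hs.1.trans hs.2; linarith
  have hpr : 0 < p - Real.sqrt q := by
    by_contra hc
    have := Real.sqrt_eq_zero_of_nonpos (le_of_not_gt hc)
    linarith
  have hs2 : s ^ 2 < p - Real.sqrt q := by
    have habs : |s| < Real.sqrt (p - Real.sqrt q) := abs_lt.mpr hs
    calc s ^ 2 = |s| ^ 2 := (sq_abs s).symm
    _ < Real.sqrt (p - Real.sqrt q) ^ 2 := by
        apply pow_lt_pow_left₀ habs (abs_nonneg s) (by norm_num)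
    _ = p - Real.sqrt q := Real.sq_sqrt hpr.le
  set A := p - s ^ 2 with hA
  have hAq : Real.sqrt q < A := by linarith
  have hA0 : 0 < A := lt_of_le_of_lt (Real.sqrt_nonneg q) hAq
  have hA2q : q < A ^ 2 := by
    calc q = Real.sqrt q ^ 2 := (Real.sq_sqrt hq0).symm
    _ < A ^ 2 := by nlinarith [Real.sqrt_nonneg q]
  set B := Real.sqrt (A ^ 2 - q) with hB
  have hB0 : 0 ≤ B := Real.sqrt_nonneg _
  have hB2 : B ^ 2 = A ^ 2 - q := Real.sq_sqrt (by linarith)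
  have hh2 : h ^ 2 = A + B := by
    rw [hdef]; exact Real.sq_sqrt (by positivity)
  have hh0 : 0 < h := by
    rw [hdef]; apply Real.sqrt_pos.mpr; positivity
  have hne : h ≠ 0 := hh0.ne'
  have key : s ^ 2 + (1 / 2) * (h + (1 - p) / h) ^ 2 + (q - (p - 1) ^ 2) / (2 * h ^ 2) = 1 := by
    field_simp
    nlinarith [hh2, hB2, sq_nonneg h, sq_nonneg (A+B)]
  refine ⟨key, fun m x hx => ?_⟩
  rw [mem_sphere_zero_iff_norm]
  have hxs : ∑ i, x i ^ 2 = 1 := by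
    have := EuclideanSpace.norm_eq x
    rw [hx] at this
    have h1 : Real.sqrt (∑ i, ‖x i‖ ^ 2) = 1 := this.symm
    have := Real.sqrt_eq_one.mp h1
    simpa [Real.norm_eq_abs, sq_abs] using this
  rw [EuclideanSpace.norm_eq]
  have hsum : ∑ i : Fin (m+2), ‖((WithLp.equiv 2 (Fin (m + 2) → ℝ)).symm
          (Fin.snoc
            (Fin.snoc (fun i : Fin m => s * x i)
              (Real.sqrt 2 / 2 * (h + (1 - p) / h)))
            (Real.sqrt (q - (p - 1) ^ 2) / (Real.sqrt 2 * h)))) i‖ ^ 2 = 1 := by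
    rw [Fin.sum_univ_castSucc, Fin.sum_univ_castSucc]
    simp only [WithLp.equiv_symm_apply, PiLp.toLp_apply, Fin.snoc_castSucc, Fin.snoc_last,
      Real.norm_eq_abs, sq_abs]
    have e1 : ∑ i : Fin m, (s * x i) ^ 2 = s ^ 2 := by
      simp [mul_pow, ← Finset.mul_sum, hxs]
    have e2 : (Real.sqrt 2 / 2 * (h + (1 - p) / h)) ^ 2
        = (1/2) * (h + (1 - p) / h) ^ 2 := by
      rw [mul_pow, div_pow, Real.sq_sqrt (by norm_num : (0:ℝ) ≤ 2)]; ring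
    have e3 : (Real.sqrt (q - (p - 1) ^ 2) / (Real.sqrt 2 * h)) ^ 2
        = (q - (p - 1) ^ 2) / (2 * h ^ 2) := by
      rw [div_pow, mul_pow, Real.sq_sqrt (by linarith : (0:ℝ) ≤ q - (p-1)^2),
        Real.sq_sqrt (by norm_num : (0:ℝ) ≤ 2)]
    rw [e1, e2, e3]
    linarith [key]
  rw [hsum, Real.sqrt_one]
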